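/- Let A : ℝ³∖{0} → Matrix(3,3,ℝ) be a continuous map (components A_μ{}^i(x)) which is equivariant under rotations: A(Rx) = R A(x) Rᵀ for every R ∈ SO(3) and every x ≠ 0. Then there exist functions W, V, U : (0,∞) → ℝ such that A_μ{}^i(x) = ε_μ{}^{ij} (x_j/r) W(r) + δ_μ^i V(r) + (x_μ x^i/r²) U(r) for all x ≠ 0, where r = |x|. That is, the ansatz with three radial functions is the most general spherically symmetric second-rank field on ℝ³∖{0}. -/

import Mathlib

open Matrix

/-- The totally antisymmetric Levi-Civita symbol on three indices, `eps 0 1 2 = 1`. -/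
noncomputable def eps (i j k : Fin 3) : ℝ :=
  ((j : ℝ) - (i : ℝ)) * ((k : ℝ) - (i : ℝ)) * ((k : ℝ) - (j : ℝ)) / 2

/-- The radius `r = |x|` of a point `x ∈ ℝ³`. -/
noncomputable def rad (x : Fin 3 → ℝ) : ℝ := Real.sqrt (∑ i, x i ^ 2)

lemma rad_sq (x : Fin 3 → ℝ) : rad x ^ 2 = x 0 ^ 2 + x 1 ^ 2 + x 2 ^ 2 := by
  rw [rad, Real.sq_sqrt (by positivity)]
  simp [Fin.sum_univ_three]

lemma rad_pos {x : Fin 3 → ℝ} (hx : x ≠ 0) : 0 < rad x := by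
  obtain ⟨i, hi⟩ := Function.ne_iff.mp hx
  have h1 : (0:ℝ) < x i ^ 2 := lt_of_le_of_ne (sq_nonneg _) (Ne.symm (pow_ne_zero 2 hi))
  exact Real.sqrt_pos.mpr (lt_of_lt_of_le h1
    (Finset.single_le_sum (f := fun j => x j ^ 2) (fun j _ => by positivity) (Finset.mem_univ i)))

lemma exists_rot (x : Fin 3 → ℝ) (hx : x ≠ 0) :
    ∃ R : Matrix (Fin 3) (Fin 3) ℝ, Rᵀ * R = 1 ∧ R.det = 1 ∧ ∀ j, x j = rad x * R j 2 := by
  set r := rad x with hrdef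
  have hr : 0 < r := rad_pos hx
  have hsum : x 0 ^ 2 + x 1 ^ 2 + x 2 ^ 2 = r ^ 2 := (rad_sq x).symm
  by_cases hdeg : x 2 = -r
  · -- degenerate case: x = (0, 0, -r)
    have h0 : x 0 = 0 := by nlinarith [sq_nonneg (x 0), sq_nonneg (x 1)]
    have h1 : x 1 = 0 := by nlinarith [sq_nonneg (x 0), sq_nonneg (x 1)]
    refine ⟨Matrix.diagonal ![1,-1,-1], ?_, ?_, ?_⟩
    · rw [Matrix.diagonal_transpose, Matrix.diagonal_mul_diagonal]
      ext i j
      rw [Matrix.diagonal_apply, Matrix.one_apply]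
      fin_cases i <;> fin_cases j <;> norm_num
    · rw [Matrix.det_diagonal, Fin.prod_univ_three]; norm_num [Matrix.cons_val_two, Matrix.vecHead, Matrix.vecTail]
    · intro j; fin_cases j <;> simp [Matrix.diagonal_apply, h0, h1, hdeg]
  · -- generic case: Rodrigues-type reflection rotation
    have hx2 : |x 2| ≤ r := by
      rw [abs_le]
      constructor <;> nlinarith [sq_nonneg (x 0), sq_nonneg (x 1)]
    have hs : 0 < r + x 2 := by
      rcases lt_or_eq_of_le (neg_le_of_abs_le hx2) with h | h
      · linarith
      · exact absurd h.symm hdeg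
    set m : Fin 3 → ℝ := fun i => x i / r + (if i = 2 then 1 else 0) with hmdef
    set c : ℝ := r / (r + x 2) with hcdef
    set R : Matrix (Fin 3) (Fin 3) ℝ :=
      Matrix.of (fun i j => c * m i * m j - if i = j then 1 else 0) with hRdef
    have hm0 : m 0 = x 0 / r := by simp [hmdef]
    have hm1 : m 1 = x 1 / r := by simp [hmdef]
    have hm2 : m 2 = x 2 / r + 1 := by simp [hmdef]
    have hkey : c * (m 0 ^ 2 + m 1 ^ 2 + m 2 ^ 2) = 2 := by
      rw [hm0, hm1, hm2, hcdef]
      field_simp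
      nlinarith [hsum]
    have hRa : ∀ i j, R i j = c * m i * m j - if i = j then 1 else 0 := fun i j => rfl
    refine ⟨R, ?_, ?_, ?_⟩
    · ext i j
      fin_cases i <;> fin_cases j <;>
        simp [Matrix.mul_apply, Fin.sum_univ_three, Matrix.one_apply, hRa, Matrix.transpose_apply]
      · linear_combination (c * m 0 * m 0) * hkey
      · linear_combination (c * m 0 * m 1) * hkey
      · linear_combination (c * m 0 * m 2) * hkey
      · linear_combination (c * m 1 * m 0) * hkey
      · linear_combination (c * m 1 * m 1) * hkey
      · linear_combination (c * m 1 * m 2) * hkey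
      · linear_combination (c * m 2 * m 0) * hkey
      · linear_combination (c * m 2 * m 1) * hkey
      · linear_combination (c * m 2 * m 2) * hkey
    · rw [Matrix.det_fin_three]
      simp [hRa]
      linear_combination hkey
    · intro j
      fin_cases j
      · show x 0 = r * (c * m 0 * m 2 - if (0:Fin 3) = 2 then 1 else 0)
        rw [if_neg (by decide), hm0, hm2, hcdef]
        field_simp
        ring
      · show x 1 = r * (c * m 1 * m 2 - if (1:Fin 3) = 2 then 1 else 0)
        rw [if_neg (by decide), hm1, hm2, hcdef]
        field_simp
        ring
      · show x 2 = r * (c * m 2 * m 2 - if (2:Fin 3) = 2 then 1 else 0)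
        rw [if_pos rfl, hm2, hcdef]
        field_simp
        ring

lemma cross_col (R : Matrix (Fin 3) (Fin 3) ℝ) (h1 : Rᵀ * R = 1) (h2 : R.det = 1)
    (μ i : Fin 3) :
    R μ 0 * R i 1 - R μ 1 * R i 0 = ∑ j, eps μ i j * R j 2 := by
  have hR' : R * Rᵀ = 1 := mul_eq_one_comm.mp h1
  have hadj : Matrix.adjugate R = Rᵀ := by
    have h3 : R * Matrix.adjugate R = 1 := by rw [Matrix.mul_adjugate, h2, one_smul]
    have h4 : Matrix.adjugate R * R = 1 := mul_eq_one_comm.mp h3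
    calc Matrix.adjugate R = Matrix.adjugate R * (R * Rᵀ) := by rw [hR', Matrix.mul_one]
    _ = (Matrix.adjugate R * R) * Rᵀ := by rw [Matrix.mul_assoc]
    _ = Rᵀ := by rw [h4, Matrix.one_mul]
  have h5 := (Matrix.adjugate_fin_three R).symm.trans hadj
  have e22 : R 2 2 = R 0 0 * R 1 1 - R 0 1 * R 1 0 := by
    have := congrFun (congrFun h5 2) 2; simpa using this.symm
  have e12 : R 1 2 = -(R 0 0 * R 2 1) + R 0 1 * R 2 0 := by
    have := congrFun (congrFun h5 2) 1; simpa using this.symm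
  have e02 : R 0 2 = R 1 0 * R 2 1 - R 1 1 * R 2 0 := by
    have := congrFun (congrFun h5 2) 0; simpa using this.symm
  fin_cases μ <;> fin_cases i <;>
    simp [eps, Fin.sum_univ_three] <;> norm_num <;> linarith [e02, e12, e22]

noncomputable def nv (r : ℝ) : Fin 3 → ℝ := fun j => if j = 2 then r else 0

/-- every continuous rotation-equivariant matrix field on `ℝ³ ∖ {0}`
(`A(Rx) = R A(x) Rᵀ` for all `R ∈ SO(3)`) has the spherically symmetric form
`A_μ{}^i = ε_μ{}^{ij} (x_j/r) W + δ_μ^i V + (x_μ x^i/r²) U` for some radial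
functions `W, V, U`. -/
theorem stmt14 (A : (Fin 3 → ℝ) → Matrix (Fin 3) (Fin 3) ℝ)
    (hA : ContinuousOn A {x : Fin 3 → ℝ | x ≠ 0})
    (heq : ∀ R : Matrix (Fin 3) (Fin 3) ℝ, Rᵀ * R = 1 → R.det = 1 →
      ∀ x : Fin 3 → ℝ, x ≠ 0 → A (R.mulVec x) = R * A x * Rᵀ) :
    ∃ W V U : ℝ → ℝ, ∀ x : Fin 3 → ℝ, x ≠ 0 → ∀ μ i, A x μ i =
      (∑ j, eps μ i j * x j / rad x) * W (rad x) +
      (if μ = i then (1 : ℝ) else 0) * V (rad x) +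
      x μ * x i / rad x ^ 2 * U (rad x) := by
  refine ⟨fun r => A (nv r) 0 1, fun r => A (nv r) 0 0,
    fun r => A (nv r) 2 2 - A (nv r) 0 0, ?_⟩
  intro x hx μ i
  have hr : 0 < rad x := rad_pos hx
  set r := rad x with hrdef
  have hn0 : nv r ≠ 0 := by
    intro h
    have := congrFun h 2
    simp [nv] at this
    exact absurd this (ne_of_gt hr)
  obtain ⟨R, h1, h2, h3⟩ := exists_rot x hx
  have hmul : R.mulVec (nv r) = x := by
    funext j
    simp [Matrix.mulVec, dotProduct, Fin.sum_univ_three, nv]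
    rw [h3 j]; ring
  -- structure of A (nv r) from the stabilizer of the axis
  have hz1 : (Matrix.diagonal ![(-1:ℝ),-1,1])ᵀ * Matrix.diagonal ![(-1:ℝ),-1,1] = 1 := by
    rw [Matrix.diagonal_transpose, Matrix.diagonal_mul_diagonal]
    ext a b
    rw [Matrix.diagonal_apply, Matrix.one_apply]
    fin_cases a <;> fin_cases b <;> norm_num
  have hz2 : (Matrix.diagonal ![(-1:ℝ),-1,1]).det = 1 := by
    rw [Matrix.det_diagonal, Fin.prod_univ_three]; norm_num [Matrix.cons_val_two, Matrix.vecHead, Matrix.vecTail]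
  have hzv : (Matrix.diagonal ![(-1:ℝ),-1,1]).mulVec (nv r) = nv r := by
    funext j
    rw [Matrix.mulVec_diagonal]
    fin_cases j <;> simp [nv]
  have hz := heq _ hz1 hz2 (nv r) hn0
  rw [hzv] at hz
  have z02 : A (nv r) 0 2 = 0 := by
    have := congrFun (congrFun hz 0) 2
    simp [Matrix.mul_apply, Fin.sum_univ_three, Matrix.diagonal_apply,
      Matrix.transpose_apply] at this
    linarith
  have z12 : A (nv r) 1 2 = 0 := by
    have := congrFun (congrFun hz 1) 2
    simp [Matrix.mul_apply, Fin.sum_univ_three, Matrix.diagonal_apply,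
      Matrix.transpose_apply] at this
    linarith
  have z20 : A (nv r) 2 0 = 0 := by
    have := congrFun (congrFun hz 2) 0
    simp [Matrix.mul_apply, Fin.sum_univ_three, Matrix.diagonal_apply,
      Matrix.transpose_apply] at this
    linarith
  have z21 : A (nv r) 2 1 = 0 := by
    have := congrFun (congrFun hz 2) 1
    simp [Matrix.mul_apply, Fin.sum_univ_three, Matrix.diagonal_apply,
      Matrix.transpose_apply] at this
    linarith
  have hs1 : (!![(0:ℝ),-1,0; 1,0,0; 0,0,1])ᵀ * !![(0:ℝ),-1,0; 1,0,0; 0,0,1] = 1 := by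
    ext a b
    rw [Matrix.mul_apply]
    fin_cases a <;> fin_cases b <;>
      simp [Fin.sum_univ_three, Matrix.one_apply, Matrix.transpose_apply,
        Matrix.vecHead, Matrix.vecTail, Function.comp]
  have hs2 : (!![(0:ℝ),-1,0; 1,0,0; 0,0,1]).det = 1 := by
    simp [Matrix.det_fin_three]
  have hsv : (!![(0:ℝ),-1,0; 1,0,0; 0,0,1]).mulVec (nv r) = nv r := by
    funext j
    fin_cases j <;>
      simp [Matrix.mulVec, dotProduct, Fin.sum_univ_three, nv]
  have hsA := heq _ hs1 hs2 (nv r) hn0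
  rw [hsv] at hsA
  have s11 : A (nv r) 1 1 = A (nv r) 0 0 := by
    have := congrFun (congrFun hsA 0) 0
    simp [Matrix.mul_apply, Fin.sum_univ_three, Matrix.transpose_apply,
      Matrix.vecMul, dotProduct, Matrix.vecHead, Matrix.vecTail] at this
    linarith
  have s10 : A (nv r) 1 0 = -A (nv r) 0 1 := by
    have := congrFun (congrFun hsA 0) 1
    simp [Matrix.mul_apply, Fin.sum_univ_three, Matrix.transpose_apply,
      Matrix.vecMul, dotProduct, Matrix.vecHead, Matrix.vecTail] at this
    linarith
  -- transport to x
  have hAx : A x = R * A (nv r) * Rᵀ := by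
    rw [← hmul]; exact heq R h1 h2 (nv r) hn0
  have hRR : R * Rᵀ = 1 := mul_eq_one_comm.mp h1
  have horth : R μ 0 * R i 0 + R μ 1 * R i 1 + R μ 2 * R i 2
      = if μ = i then (1:ℝ) else 0 := by
    have := congrFun (congrFun hRR μ) i
    simpa [Matrix.mul_apply, Fin.sum_univ_three, Matrix.one_apply,
      Matrix.transpose_apply] using this
  have hcross := cross_col R h1 h2 μ i
  have t1 : (∑ j, eps μ i j * x j / r) = R μ 0 * R i 1 - R μ 1 * R i 0 := by
    rw [hcross]
    refine Finset.sum_congr rfl fun j _ => ?_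
    rw [h3 j]
    field_simp
    ring
  have t2 : x μ * x i / r ^ 2 = R μ 2 * R i 2 := by
    rw [h3 μ, h3 i]
    field_simp
    ring
  rw [hAx, t1, t2, ← horth]
  simp only [Matrix.mul_apply, Fin.sum_univ_three, Matrix.transpose_apply,
    z02, z12, z20, z21, s11, s10]
  ring
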